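/- Let B = (A | b) be an r×(q+1) matrix with q < r, where A is r×q of full column rank and b ∈ C^r, and let U be a matrix whose columns form an orthonormal basis of the orthogonal complement of the column space of A. Then v₂(B) = v₂(A)·‖U*b‖, where v₂(M)² = det(M*M). -/

import Mathlib

open Matrix BigOperators Finset

noncomputable section

/-- `P` is the Moore–Penrose pseudoinverse of `A` (the four Penrose conditions). -/
def Penrose {m n : ℕ} (A : Matrix (Fin m) (Fin n) ℂ) (P : Matrix (Fin n) (Fin m) ℂ) : Prop :=
  A * P * A = A ∧ P * A * P = P ∧ (A * P)ᴴ = A * P ∧ (P * A)ᴴ = P * A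

/-- spectral (l2 operator) norm of a matrix -/
def specNorm {m n : ℕ} (A : Matrix (Fin m) (Fin n) ℂ) : ℝ :=
  ‖LinearMap.toContinuousLinearMap (Matrix.toEuclideanLin A)‖

/-- `σ` lists the singular values of `A` in nonincreasing order, padded with zeros. -/
def IsSVDSeq {m n : ℕ} (A : Matrix (Fin m) (Fin n) ℂ) (σ : ℕ → ℝ) : Prop :=
  Antitone σ ∧ (∀ j, 0 ≤ σ j) ∧ (∀ j, min m n ≤ j → σ j = 0) ∧
  ∃ U : Matrix (Fin m) (Fin m) ℂ, ∃ V : Matrix (Fin n) (Fin n) ℂ,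
    U ∈ Matrix.unitaryGroup (Fin m) ℂ ∧ V ∈ Matrix.unitaryGroup (Fin n) ℂ ∧
    A = U * (Matrix.of fun (i : Fin m) (j : Fin n) => if (i : ℕ) = (j : ℕ) then (σ (i : ℕ) : ℂ) else 0) * Vᴴ

/-- the volume of a matrix: the product of its singular values, i.e.
`√(det (M Mᴴ))` for wide matrices and `√(det (Mᴴ M))` for tall ones. -/
def vol {m n : Type*} [Fintype m] [Fintype n] [DecidableEq m] [DecidableEq n]
    (M : Matrix m n ℂ) : ℝ :=
  if Fintype.card m ≤ Fintype.card n then Real.sqrt (M * Mᴴ).det.re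
  else Real.sqrt (Mᴴ * M).det.re

open ComplexOrder in
lemma rank_conjTranspose_mul_self' {m n : Type*} [Fintype m] [Fintype n] [DecidableEq n]
    (A : Matrix m n ℂ) : (Aᴴ * A).rank = A.rank :=
  Matrix.rank_conjTranspose_mul_self A

lemma det_mul_comm_of_equiv {m n R : Type*} [Fintype m] [Fintype n] [DecidableEq m]
    [DecidableEq n] [CommRing R] (M : Matrix m n R) (N : Matrix n m R) (e : m ≃ n) :
    (M * N).det = (N * M).det := by
  have h1 : M.submatrix id ⇑e * N.submatrix ⇑e id = M * N := by
    rw [Matrix.submatrix_mul_equiv M N id e id]; rfl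
  have h2 : N.submatrix ⇑e ⇑(Equiv.refl m) * M.submatrix ⇑(Equiv.refl m) ⇑e
      = (N * M).submatrix ⇑e ⇑e := Matrix.submatrix_mul_equiv N M ⇑e (Equiv.refl m) ⇑e
  calc (M * N).det = (M.submatrix id ⇑e * N.submatrix ⇑e id).det := by rw [h1]
    _ = (N.submatrix ⇑e id * M.submatrix id ⇑e).det := Matrix.det_mul_comm _ _
    _ = ((N * M).submatrix ⇑e ⇑e).det := by rw [← h2]; rfl
    _ = (N * M).det := Matrix.det_submatrix_equiv_self e _

/-- Volume of a matrix with an appended column: v₂(A | b) = v₂(A)·‖U*b‖. -/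
theorem stmt_13 {r q : ℕ} (hq : q < r)
    (A : Matrix (Fin r) (Fin q) ℂ) (b : Fin r → ℂ) (hA : A.rank = q)
    (U : Matrix (Fin r) (Fin (r - q)) ℂ)
    (hUorth : Uᴴ * U = 1) (hUA : Uᴴ * A = 0) :
    vol (Matrix.fromCols A (Matrix.of fun i (_ : Unit) => b i)) =
      vol A * Real.sqrt (∑ i, ‖(Uᴴ *ᵥ b) i‖ ^ 2) := by
  set c : Matrix (Fin r) Unit ℂ := Matrix.of fun i (_ : Unit) => b i with hc
  set s : ℝ := ∑ i, ‖(Uᴴ *ᵥ b) i‖ ^ 2 with hs_def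
  have hs : 0 ≤ s := Finset.sum_nonneg fun i _ => by positivity
  -- Aᴴ * A is invertible
  have hC : IsUnit (Aᴴ * A) := by
    rw [← Matrix.mulVec_surjective_iff_isUnit]
    have hrank : (Aᴴ * A).rank = q := by
      rw [rank_conjTranspose_mul_self', hA]
    have htop : LinearMap.range (Aᴴ * A).mulVecLin = ⊤ := by
      apply Submodule.eq_top_of_finrank_eq
      rw [show Module.finrank ℂ ↥(LinearMap.range (Aᴴ * A).mulVecLin) = (Aᴴ * A).rank from rfl,
        hrank, Module.finrank_fintype_fun_eq_card, Fintype.card_fin]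
    intro v
    obtain ⟨w, hw⟩ := (LinearMap.range_eq_top.mp htop) v
    exact ⟨w, by simpa using hw⟩
  obtain ⟨iC⟩ := hC.nonempty_invertible
  have hAU : Aᴴ * U = 0 := by
    have := congrArg conjTranspose hUA
    simpa using this
  -- key identity
  have hr : q + (r - q) = r := Nat.add_sub_cancel' hq.le
  have e1 : Fin r ≃ Fin q ⊕ Fin (r - q) := (finCongr hr.symm).trans finSumFinEquiv.symm
  have hNM : fromRows (⅟(Aᴴ * A) * Aᴴ) Uᴴ * fromCols A U = 1 := by
    rw [fromRows_mul_fromCols, Matrix.mul_assoc, Matrix.mul_assoc, invOf_mul_self, hAU,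
      hUA, hUorth, Matrix.mul_zero, ← fromBlocks_one]
  have hMN := (fromCols_mul_fromRows_eq_one_comm e1 A U (⅟(Aᴴ * A) * Aᴴ) Uᴴ).mpr hNM
  rw [fromCols_mul_fromRows] at hMN
  -- Schur complement
  set B : Matrix (Fin r) (Fin q ⊕ Unit) ℂ := fromCols A c with hB
  have hBB : Bᴴ * B = fromBlocks (Aᴴ * A) (Aᴴ * c) (cᴴ * A) (cᴴ * c) := by
    rw [hB, conjTranspose_fromCols_eq_fromRows_conjTranspose, fromRows_mul_fromCols]
  have hdet1 : (Bᴴ * B).det = (Aᴴ * A).det * (cᴴ * c - cᴴ * A * ⅟(Aᴴ * A) * (Aᴴ * c)).det := by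
    rw [hBB, Matrix.det_fromBlocks₁₁]
  have hSchur : cᴴ * c - cᴴ * A * ⅟(Aᴴ * A) * (Aᴴ * c) = (Uᴴ * c)ᴴ * (Uᴴ * c) := by
    have h1 : cᴴ * A * ⅟(Aᴴ * A) * (Aᴴ * c) = cᴴ * (A * (⅟(Aᴴ * A) * Aᴴ)) * c := by
      simp only [Matrix.mul_assoc]
    have h2 : A * (⅟(Aᴴ * A) * Aᴴ) = 1 - U * Uᴴ := eq_sub_of_add_eq hMN
    have h3 : cᴴ * (1 - U * Uᴴ) * c = cᴴ * c - cᴴ * U * (Uᴴ * c) := by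
      simp only [Matrix.mul_sub, Matrix.sub_mul, Matrix.mul_one, Matrix.one_mul,
        Matrix.mul_assoc]
    rw [h1, h2, h3, sub_sub_cancel, conjTranspose_mul, conjTranspose_conjTranspose,
      Matrix.mul_assoc]
  have hUc : Uᴴ * c = Matrix.of (fun i (_ : Unit) => (Uᴴ *ᵥ b) i) := by
    ext i j
    simp [hc, Matrix.mul_apply, Matrix.mulVec, dotProduct]
  have hdet2 : ((Uᴴ * c)ᴴ * (Uᴴ * c)).det = (s : ℂ) := by
    rw [Matrix.det_unique, hUc]
    simp only [Matrix.mul_apply, Matrix.conjTranspose_apply, Matrix.of_apply]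
    rw [hs_def]
    push_cast
    refine Finset.sum_congr rfl fun i _ => ?_
    simpa [RCLike.star_def] using RCLike.conj_mul ((Uᴴ *ᵥ b) i)
  have hdet : (Bᴴ * B).det = (Aᴴ * A).det * (s : ℂ) := by
    rw [hdet1, hSchur, hdet2]
  have hre : (Bᴴ * B).det.re = (Aᴴ * A).det.re * s := by
    rw [hdet]; simp [Complex.mul_re]
  -- compute vol B
  have hvolB : vol B = Real.sqrt ((Bᴴ * B).det.re) := by
    unfold vol
    split_ifs with h
    · have hcard : r = q + 1 := by
        have : r ≤ q + 1 := by simpa using h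
        omega
      have e2 : Fin r ≃ Fin q ⊕ Unit :=
        (finCongr hcard).trans (finSumFinEquiv.symm.trans
          (Equiv.sumCongr (Equiv.refl _) (Equiv.ofUnique (Fin 1) Unit)))
      rw [det_mul_comm_of_equiv B Bᴴ e2]
    · rfl
  have hvolA : vol A = Real.sqrt ((Aᴴ * A).det.re) := by
    unfold vol
    rw [if_neg]
    simpa using hq.not_ge
  rw [hvolB, hvolA, hre, Real.sqrt_mul' _ hs]
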